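/- For any ξ ∈ Φ_BYG, the triangle Ω(ξ) is forward invariant: f_ξ(Ω(ξ)) ⊆ Ω(ξ). -/

import Mathlib

noncomputable section

/-- The parameter region `Φ`: `τ_L > δ_L + 1`, `δ_L > 0`, `τ_R < -(δ_R + 1)`, `δ_R > 0`. -/
def PhiSet : Set (ℝ × ℝ × ℝ × ℝ) :=
  {ξ | ξ.1 > ξ.2.1 + 1 ∧ 0 < ξ.2.1 ∧ ξ.2.2.1 < -(ξ.2.2.2 + 1) ∧ 0 < ξ.2.2.2}

/-- The function `φ` whose zero set bounds `Φ_BYG`. -/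
def phiFn (ξ : ℝ × ℝ × ℝ × ℝ) : ℝ :=
  ξ.2.2.2 - (1 + ξ.2.2.1) * ξ.2.1
    + (1 / 2) * ((1 + ξ.2.2.1) * ξ.1 - ξ.2.2.1 - ξ.2.1 - ξ.2.2.2)
      * (ξ.1 + Real.sqrt (ξ.1 ^ 2 - 4 * ξ.2.1))

/-- The region `Φ_BYG = {ξ ∈ Φ | φ(ξ) > 0}`. -/
def PhiBYG : Set (ℝ × ℝ × ℝ × ℝ) := {ξ ∈ PhiSet | 0 < phiFn ξ}

/-- The two-dimensional border-collision normal form `f_ξ`. -/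
def fmap (ξ : ℝ × ℝ × ℝ × ℝ) (z : ℝ × ℝ) : ℝ × ℝ :=
  if z.1 ≤ 0 then (ξ.1 * z.1 + z.2 + 1, -(ξ.2.1 * z.1))
  else (ξ.2.2.1 * z.1 + z.2 + 1, -(ξ.2.2.2 * z.1))

/-- The unstable eigenvalue `λ_L^u` of `A_L`. -/
def lamLu (ξ : ℝ × ℝ × ℝ × ℝ) : ℝ := (ξ.1 + Real.sqrt (ξ.1 ^ 2 - 4 * ξ.2.1)) / 2

/-- The stable eigenvalue `λ_L^s` of `A_L`. -/
def lamLs (ξ : ℝ × ℝ × ℝ × ℝ) : ℝ := (ξ.1 - Real.sqrt (ξ.1 ^ 2 - 4 * ξ.2.1)) / 2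

/-- The fixed point `Y` of the left piece of `f_ξ`. -/
def fpY (ξ : ℝ × ℝ × ℝ × ℝ) : ℝ × ℝ :=
  (-1 / (ξ.1 - ξ.2.1 - 1), ξ.2.1 / (ξ.1 - ξ.2.1 - 1))

/-- The intersection point of the line through `p` with slope `sp`
and the line through `q` with slope `sq` (assuming `sp ≠ sq`). -/
def lineInter (p q : ℝ × ℝ) (sp sq : ℝ) : ℝ × ℝ :=
  ((q.2 - p.2 + sp * p.1 - sq * q.1) / (sp - sq),
   p.2 + sp * ((q.2 - p.2 + sp * p.1 - sq * q.1) / (sp - sq) - p.1))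

/-- The point `D`, the intersection of `E^u(Y)` with `y = 0`. -/
def ptD (ξ : ℝ × ℝ × ℝ × ℝ) : ℝ × ℝ := (1 / (1 - lamLs ξ), 0)

/-- The point `B`, the intersection of `E^u(Y)` (slope `λ_L^u - τ_L`) with the line
through `f_ξ(D)` parallel to `E^s(Y)` (slope `λ_L^s - τ_L`). -/
def ptB (ξ : ℝ × ℝ × ℝ × ℝ) : ℝ × ℝ :=
  lineInter (fpY ξ) (fmap ξ (ptD ξ)) (lamLu ξ - ξ.1) (lamLs ξ - ξ.1)

/-- The closed triangle `Ω(ξ)` with vertices `D`, `f_ξ(D)`, `B`. -/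
def OmegaSet (ξ : ℝ × ℝ × ℝ × ℝ) : Set (ℝ × ℝ) :=
  convexHull ℝ {ptD ξ, fmap ξ (ptD ξ), ptB ξ}

set_option maxHeartbeats 1000000

private lemma mem_hull3 {P Q R z : ℝ × ℝ}
    (h : z ∈ convexHull ℝ ({P, Q, R} : Set (ℝ × ℝ))) :
    ∃ u v t : ℝ, 0 ≤ u ∧ 0 ≤ v ∧ 0 ≤ t ∧ u + v + t = 1 ∧ u • P + v • Q + t • R = z := by
  rw [show ({P, Q, R} : Set (ℝ × ℝ)) = insert P {Q, R} from rfl,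
    convexHull_insert ⟨Q, by simp⟩, mem_convexJoin] at h
  obtain ⟨x, hx, p, hp, hseg⟩ := h
  rw [Set.mem_singleton_iff] at hx
  subst hx
  rw [convexHull_pair] at hp
  obtain ⟨b1, c1, hb1, hc1, hbc, rfl⟩ := hp
  obtain ⟨a1, d1, ha1, hd1, had, hzeq⟩ := hseg
  refine ⟨a1, d1 * b1, d1 * c1, ha1, mul_nonneg hd1 hb1, mul_nonneg hd1 hc1, by nlinarith, ?_⟩
  rw [← hzeq, smul_add, smul_smul, smul_smul, add_assoc]

private lemma hull3_mem {P Q R : ℝ × ℝ} {u v t : ℝ} (hu : 0 ≤ u) (hv : 0 ≤ v) (ht : 0 ≤ t)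
    (hs : u + v + t = 1) : u • P + v • Q + t • R ∈ convexHull ℝ ({P, Q, R} : Set (ℝ × ℝ)) := by
  have h := Finset.centerMass_mem_convexHull (t := (Finset.univ : Finset (Fin 3)))
    (w := ![u, v, t]) (z := ![P, Q, R]) (s := ({P, Q, R} : Set (ℝ × ℝ)))
    (by intro i _; fin_cases i <;> simpa)
    (by simp [Fin.sum_univ_three, hs])
    (by intro i _; fin_cases i <;> simp)
  simpa [Finset.centerMass, Fin.sum_univ_three, hs, add_assoc] using h

/-- Proposition 3.1: for any `ξ ∈ Φ_BYG`, the triangle `Ω(ξ)` is forward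
invariant: `f_ξ(Ω(ξ)) ⊆ Ω(ξ)`. -/
theorem Omega_forward_invariant (ξ : ℝ × ℝ × ℝ × ℝ) (hξ : ξ ∈ PhiBYG) :
    fmap ξ '' OmegaSet ξ ⊆ OmegaSet ξ := by
  obtain ⟨a, b, c, e⟩ := ξ
  obtain ⟨⟨hA, hB0, hC, hE⟩, hphi⟩ := hξ
  simp only at hA hB0 hC hE hphi
  obtain ⟨s, hs_def⟩ : ∃ x : ℝ, x = Real.sqrt (a ^ 2 - 4 * b) := ⟨_, rfl⟩
  have hd4 : 0 < a ^ 2 - 4 * b := by nlinarith [sq_nonneg (a - 2)]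
  have hs2 : s ^ 2 = a ^ 2 - 4 * b := by rw [hs_def]; exact Real.sq_sqrt hd4.le
  have hs0 : 0 < s := by rw [hs_def]; exact Real.sqrt_pos.mpr hd4
  obtain ⟨L, hL_def⟩ : ∃ x : ℝ, x = (a + s) / 2 := ⟨_, rfl⟩
  obtain ⟨S, hS_def⟩ : ∃ x : ℝ, x = (a - s) / 2 := ⟨_, rfl⟩
  have ha : a = L + S := by rw [hL_def, hS_def]; ring
  have hb : b = L * S := by rw [hL_def, hS_def]; linear_combination ((1:ℝ)/4) * hs2
  have hkey : (a - 2) ^ 2 < s ^ 2 := by nlinarith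
  have hS1 : S < 1 := by rw [hS_def]; nlinarith
  have hL1 : 1 < L := by rw [hL_def]; nlinarith
  have hS0 : 0 < S := by rw [hS_def]; nlinarith
  have hL0 : (0:ℝ) < L := by linarith
  have hLS : 0 < L - S := by rw [hL_def, hS_def]; linarith [hs0]
  have h1S : 0 < 1 - S := by linarith
  have hc1 : c + 1 < 0 := by linarith
  have hc0 : c < 0 := by linarith
  -- eigenvalue identities
  have hLu : lamLu (a, b, c, e) = L := by rw [hL_def, hs_def]; rfl
  have hLs : lamLs (a, b, c, e) = S := by rw [hS_def, hs_def]; rfl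
  -- positivity facts
  have hne1 : (1:ℝ) - S ≠ 0 := ne_of_gt h1S
  have hneLS : L - S ≠ 0 := ne_of_gt hLS
  have hF2 : 0 < e - L * c + L * S := by
    nlinarith [mul_pos hL0 hS0, mul_pos hL0 (neg_pos.mpr hc0)]
  have hneF2 : e - L * c + L * S ≠ 0 := ne_of_gt hF2
  have hneF2' : e - c * L + S * L ≠ 0 := by rwa [mul_comm c L, mul_comm S L]
  have hG : 0 < S + e - L * (1 + c - S) := by
    nlinarith [mul_pos hL0 (show 0 < -(1 + c - S) by linarith)]
  have hP1 : 0 < e - L * c + L * L := by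
    nlinarith [mul_pos hL0 hL0, mul_pos hL0 (neg_pos.mpr hc0)]
  have hce : 0 < c ^ 2 - e := by
    nlinarith [mul_pos (show 0 < -(c + e + 1) by linarith) hE,
      mul_pos (show 0 < -(c + e + 1) by linarith) (show 0 < -(c + e + 1) by linarith)]
  have hAA : 0 ≤ e * (S - c - L) + L * c * (c - S) := by
    nlinarith [mul_pos hL0 hce, mul_pos hE hS0, mul_pos hE (neg_pos.mpr hc0),
      mul_pos (mul_pos hL0 hS0) (neg_pos.mpr hc0)]
  -- the function phi in terms of L and S
  have h2L : a + s = 2 * L := by rw [hL_def]; ring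
  have hphi2 : phiFn (a, b, c, e) = e - (1 + c) * b + ((1 + c) * a - c - b - e) * L := by
    simp only [phiFn]
    rw [← hs_def]
    linear_combination ((1 + c) * a - c - b - e) / 2 * h2L
  rw [hphi2, ha, hb] at hphi
  -- key points
  have hD : ptD (a, b, c, e) = (1 / (1 - S), 0) := by rw [ptD, hLs]
  have hDx0 : 0 < 1 / (1 - S) := div_pos one_pos h1S
  have hFD : fmap (a, b, c, e) (ptD (a, b, c, e))
      = ((c + 1 - S) / (1 - S), -(e / (1 - S))) := by
    rw [hD]
    have hcond : ¬ ((1 / (1 - S), (0:ℝ)).1 ≤ 0) := not_le.mpr hDx0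
    simp only [fmap, if_neg hcond, Prod.mk.injEq]
    constructor
    · field_simp
      ring
    · ring
  have hmY : a - b - 1 ≠ 0 := by
    rw [ha, hb]
    nlinarith [mul_pos (sub_pos.mpr hL1) h1S]
  have hB : ptB (a, b, c, e)
      = (-((S + e - L * (1 + c - S)) / ((L - S) * (1 - S))),
         S * (e - L * c + L * S) / ((L - S) * (1 - S))) := by
    have hsp : lamLu (a, b, c, e) - (a, b, c, e).1 = -S := by
      rw [hLu]; show L - a = -S; rw [ha]; ring
    have hsq : lamLs (a, b, c, e) - (a, b, c, e).1 = -L := by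
      rw [hLs]; show S - a = -L; rw [ha]; ring
    simp only [ptB, lineInter, fpY, hFD, hsp, hsq, Prod.mk.injEq]
    rw [ha, hb] at hmY ⊢
    rw [show (-S - -L : ℝ) = L - S by ring]
    have hmY' : L + S - S * L - 1 ≠ 0 := by rwa [mul_comm S L]
    constructor
    · field_simp
      ring
    · field_simp
      ring
  -- main argument
  rintro w ⟨z, hz, rfl⟩
  simp only [OmegaSet] at hz ⊢
  obtain ⟨u, v, t, hu, hv, ht, hsum, hzeq⟩ := mem_hull3 hz
  rw [hFD, hB, hD] at hzeq
  rw [hFD, hB, hD]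
  have htt : t = 1 - u - v := by linarith
  subst htt
  obtain ⟨z1, z2⟩ := z
  have hz1 : z1 = u * (1 / (1 - S)) + v * ((c + 1 - S) / (1 - S))
      + (1 - u - v) * (-((S + e - L * (1 + c - S)) / ((L - S) * (1 - S)))) := by
    have h := congrArg Prod.fst hzeq
    simp only [Prod.smul_mk, Prod.mk_add_mk, smul_eq_mul] at h
    rw [← h]
  have hz2 : z2 = v * (-(e / (1 - S)))
      + (1 - u - v) * (S * (e - L * c + L * S) / ((L - S) * (1 - S))) := by
    have h := congrArg Prod.snd hzeq
    simp only [Prod.smul_mk, Prod.mk_add_mk, smul_eq_mul] at h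
    rw [← h]; ring
  rcases le_or_gt z1 0 with hx | hx
  · -- left branch
    have hfz : fmap (a, b, c, e) (z1, z2) = ((L + S) * z1 + z2 + 1, -(L * S * z1)) := by
      simp only [fmap, if_pos hx, Prod.mk.injEq]
      constructor
      · rw [ha]
      · rw [hb]
    rw [hfz]
    obtain ⟨u', hu'_def⟩ : ∃ x : ℝ, x = (u * (e - L * c + L * L)
        + v * (e - (1 + c) * (L * S) + ((1 + c) * (L + S) - c - L * S - e) * L)
        + (1 - u - v) * (e - (1 + c) * (L * S) + ((1 + c) * (L + S) - c - L * S - e) * L))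
        / (e - L * c + L * S) := ⟨_, rfl⟩
    obtain ⟨v', hv'_def⟩ : ∃ x : ℝ, x = v * S := ⟨_, rfl⟩
    obtain ⟨w', hw'_def⟩ : ∃ x : ℝ, x = (-(u * L * (L - S))
        + v * (L - S) * ((e - L * c + L * S) - L)
        + (1 - u - v) * L * (S + e - L * (1 + c - S))) / (e - L * c + L * S) := ⟨_, rfl⟩
    have hu' : 0 ≤ u' := by
      rw [hu'_def]
      apply div_nonneg _ hF2.le
      have h1 := mul_nonneg hu hP1.le
      have h2 := mul_nonneg hv hphi.le
      have h3 := mul_nonneg ht hphi.le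
      linarith [h1, h2, h3]
    have hv' : 0 ≤ v' := by rw [hv'_def]; exact mul_nonneg hv hS0.le
    have hw' : 0 ≤ w' := by
      rw [hw'_def]
      apply div_nonneg _ hF2.le
      have heq : -(u * L * (L - S)) + v * (L - S) * ((e - L * c + L * S) - L)
          + (1 - u - v) * L * (S + e - L * (1 + c - S))
          = L * (1 - S) * (L - S) * (-z1) + v * e * (L - S) := by
        rw [hz1]; field_simp; ring
      rw [heq]
      have h1 : 0 ≤ L * (1 - S) * (L - S) * (-z1) :=
        mul_nonneg (mul_nonneg (mul_nonneg hL0.le h1S.le) hLS.le) (by linarith)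
      have h2 : 0 ≤ v * e * (L - S) := mul_nonneg (mul_nonneg hv hE.le) hLS.le
      linarith
    have hsum' : u' + v' + w' = 1 := by
      rw [hu'_def, hv'_def, hw'_def]; field_simp; ring
    have hpt : ((L + S) * z1 + z2 + 1, -(L * S * z1))
        = u' • ((1 / (1 - S) : ℝ), (0:ℝ))
          + v' • (((c + 1 - S) / (1 - S) : ℝ), (-(e / (1 - S)) : ℝ))
          + w' • ((-((S + e - L * (1 + c - S)) / ((L - S) * (1 - S))) : ℝ),
              (S * (e - L * c + L * S) / ((L - S) * (1 - S)) : ℝ)) := by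
      simp only [Prod.smul_mk, Prod.mk_add_mk, smul_eq_mul, Prod.mk.injEq]
      rw [hu'_def, hv'_def, hw'_def, hz1, hz2]
      constructor
      · field_simp
        ring
      · field_simp
        ring
    rw [hpt]
    exact hull3_mem hu' hv' hw' hsum'
  · -- right branch
    have hfz : fmap (a, b, c, e) (z1, z2) = (c * z1 + z2 + 1, -(e * z1)) := by
      simp only [fmap, if_neg (not_le.mpr hx)]
    rw [hfz]
    obtain ⟨u', hu'_def⟩ : ∃ x : ℝ, x = (v * (e * (S - c - L) + L * c * (c - S)))
        / (e - L * c + L * S) + ((1 - u - v) * (e - L * c + L * S)) / (L - S) := ⟨_, rfl⟩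
    obtain ⟨v', hv'_def⟩ : ∃ x : ℝ, x = u + v * (1 + c)
        - (1 - u - v) * ((S + e - L * (1 + c - S)) / (L - S)) := ⟨_, rfl⟩
    obtain ⟨w', hw'_def⟩ : ∃ x : ℝ, x = v * e * (L - S) / (e - L * c + L * S) := ⟨_, rfl⟩
    have hu' : 0 ≤ u' := by
      rw [hu'_def]
      apply add_nonneg
      · exact div_nonneg (mul_nonneg hv hAA) hF2.le
      · exact div_nonneg (mul_nonneg ht hF2.le) hLS.le
    have hv' : 0 ≤ v' := by
      have heq : v' = (1 - S) * z1 + v * S := by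
        rw [hv'_def, hz1]; field_simp; ring
      rw [heq]
      have h1 : 0 ≤ (1 - S) * z1 := mul_nonneg h1S.le hx.le
      have h2 : 0 ≤ v * S := mul_nonneg hv hS0.le
      linarith
    have hw' : 0 ≤ w' := by
      rw [hw'_def]
      exact div_nonneg (mul_nonneg (mul_nonneg hv hE.le) hLS.le) hF2.le
    have hsum' : u' + v' + w' = 1 := by
      rw [hu'_def, hv'_def, hw'_def]; field_simp; ring
    have hpt : (c * z1 + z2 + 1, -(e * z1))
        = u' • ((1 / (1 - S) : ℝ), (0:ℝ))
          + v' • (((c + 1 - S) / (1 - S) : ℝ), (-(e / (1 - S)) : ℝ))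
          + w' • ((-((S + e - L * (1 + c - S)) / ((L - S) * (1 - S))) : ℝ),
              (S * (e - L * c + L * S) / ((L - S) * (1 - S)) : ℝ)) := by
      simp only [Prod.smul_mk, Prod.mk_add_mk, smul_eq_mul, Prod.mk.injEq]
      rw [hu'_def, hv'_def, hw'_def, hz1, hz2]
      constructor
      · field_simp
        ring
      · field_simp
        ring
    rw [hpt]
    exact hull3_mem hu' hv' hw' hsum'

end
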